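/- For the random period doubling substitution ϑ: a ↦ {ab, ba}, b ↦ {aa}, the bi-infinite repetition of the word aab is a periodic point in X_ϑ of prime period 3. -/

import Mathlib

open List

variable {A : Type*}

/-- Extension of a random substitution to words, by concatenation. -/
def substWord (θ : A → Set (List A)) : List A → Set (List A)
  | [] => {[]}
  | a :: u => {w | ∃ x ∈ θ a, ∃ y ∈ substWord θ u, w = x ++ y}

/-- The set of realisations of `θ^k` on a word. -/
def substPowWord (θ : A → Set (List A)) : ℕ → List A → Set (List A)
  | 0, u => {u}
  | (k+1), u => ⋃ v ∈ substPowWord θ k u, substWord θ v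

/-- The power `θ^k` as a random substitution. -/
def powSub (θ : A → Set (List A)) (k : ℕ) : A → Set (List A) :=
  fun a => substPowWord θ k [a]

/-- `θ` is a (finite range) random substitution: every letter has a nonempty
finite set of realisations, all of which are nonempty words. -/
def RandomSubstitution (θ : A → Set (List A)) : Prop :=
  ∀ a : A, (θ a).Nonempty ∧ (θ a).Finite ∧ ∀ w ∈ θ a, w ≠ []

/-- A word is `θ`-legal if it is a subword of a realisation of some power of
`θ` on some letter. -/
def IsLegal (θ : A → Set (List A)) (u : List A) : Prop :=
  ∃ k : ℕ, ∃ a : A, ∃ w ∈ substPowWord θ k [a], u <:+: w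

/-- `θ` has disjoint images. -/
def HasDisjointImages (θ : A → Set (List A)) : Prop :=
  ∀ u v : List A, IsLegal θ u → IsLegal θ v →
    (substWord θ u ∩ substWord θ v).Nonempty → u = v

/-- `θ` has constant length `ℓ`. -/
def ConstantLength (θ : A → Set (List A)) (ℓ : ℕ) : Prop :=
  ∀ a : A, ∀ w ∈ θ a, w.length = ℓ

/-- `θ` is compatible: abelianisations of realisations are well defined. -/
def Compatible [DecidableEq A] (θ : A → Set (List A)) : Prop :=
  ∀ a : A, ∀ u ∈ θ a, ∀ v ∈ θ a, ∀ b : A, u.count b = v.count b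

/-- `θ` is primitive. -/
def Primitive (θ : A → Set (List A)) : Prop :=
  ∃ k : ℕ, ∀ a b : A, ∃ w ∈ substPowWord θ k [a], b ∈ w

/-- The finite subword of a bi-infinite sequence starting at `i`, of length `n`. -/
def extract (x : ℤ → A) (i : ℤ) (n : ℕ) : List A :=
  (List.range n).map fun j => x (i + j)

/-- The RS-subshift of `θ`: bi-infinite sequences all of whose subwords are legal. -/
def Subshift (θ : A → Set (List A)) : Set (ℤ → A) :=
  {x | ∀ i : ℤ, ∀ n : ℕ, IsLegal θ (extract x i n)}

/-- `x` is a realisation-wise image of `y` under `θ`: there is a decomposition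
of `x` into consecutive inflation words, with a cut at the origin, the `n`-th
of which is a realisation of `θ` on `y n`. -/
def SeqImage (θ : A → Set (List A)) (y x : ℤ → A) : Prop :=
  ∃ c : ℤ → ℤ, c 0 = 0 ∧ (∀ n : ℤ, c n < c (n + 1)) ∧
    ∀ n : ℤ, extract x (c n) (c (n + 1) - c n).toNat ∈ θ (y n)

/-- `θ` is globally uniquely recognisable. -/
def GloballyUniquelyRecognisable (θ : A → Set (List A)) : Prop :=
  ∀ x ∈ Subshift θ, ∃! y : ℤ → A, y ∈ Subshift θ ∧
    ∃ k : ℕ, (∃ w ∈ θ (y 0), k < w.length) ∧ SeqImage θ y (fun n => x (n - k))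

/-- `x` has period `p` (as a natural number, acting on indices in `ℤ`). -/
def HasPeriod (x : ℤ → A) (p : ℕ) : Prop :=
  ∀ n : ℤ, x (n + p) = x n

/-- `x` is shift-periodic. -/
def IsPeriodic (x : ℤ → A) : Prop :=
  ∃ p : ℕ, 0 < p ∧ HasPeriod x p

/-- `p` is the prime (least) period of `x`. -/
def PrimePeriod (x : ℤ → A) (p : ℕ) : Prop :=
  0 < p ∧ HasPeriod x p ∧ ∀ q : ℕ, 0 < q → HasPeriod x q → p ≤ q

/-- `u` is a periodic block for `x`: up to shift, `x` is the bi-infinite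
repetition of `u`. -/
def PeriodicBlock (u : List A) (x : ℤ → A) : Prop :=
  u ≠ [] ∧ ∃ i : ℤ, ∀ n : ℤ, extract x (i + n * u.length) u.length = u

inductive Letter : Type
  | a : Letter
  | b : Letter
  deriving DecidableEq

/-- The random period doubling substitution `a ↦ {ab, ba}, b ↦ {aa}`. -/
def randPD : Letter → Set (List Letter) :=
  fun x => match x with
  | .a => {[Letter.a, Letter.b], [Letter.b, Letter.a]}
  | .b => {[Letter.a, Letter.a]}

/-- The bi-infinite repetition of the word `aab`. -/
def aabSeq : ℤ → Letter :=
  fun n => if n % 3 = 2 then Letter.b else Letter.a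

namespace AabAux

open Letter

lemma substWord_append {θ : Letter → Set (List Letter)} {u v x y : List Letter}
    (hx : x ∈ substWord θ u) (hy : y ∈ substWord θ v) :
    x ++ y ∈ substWord θ (u ++ v) := by
  induction u generalizing x with
  | nil =>
    have : x = [] := hx
    subst this; simpa using hy
  | cons a u ih =>
    obtain ⟨x1, hx1, x2, hx2, rfl⟩ := hx
    exact ⟨x1, hx1, x2 ++ y, ih hx2, by simp⟩

lemma randPD_nonempty : ∀ a : Letter, (randPD a).Nonempty
  | .a => ⟨[a, b], Or.inl rfl⟩
  | .b => ⟨[a, a], rfl⟩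

lemma substWord_nonempty : ∀ u : List Letter, (substWord randPD u).Nonempty
  | [] => ⟨[], rfl⟩
  | c :: u => by
    obtain ⟨x, hx⟩ := randPD_nonempty c
    obtain ⟨y, hy⟩ := substWord_nonempty u
    exact ⟨x ++ y, x, hx, y, hy, rfl⟩

lemma infix_lift {u w v : List Letter} (huw : u <:+: w)
    (hv : v ∈ substWord randPD u) :
    ∃ w' ∈ substWord randPD w, v <:+: w' := by
  obtain ⟨s, t, rfl⟩ := huw
  obtain ⟨x, hx⟩ := substWord_nonempty s
  obtain ⟨y, hy⟩ := substWord_nonempty t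
  have hmem := substWord_append hx (substWord_append hv hy)
  rw [← List.append_assoc, ← List.append_assoc] at hmem
  exact ⟨x ++ v ++ y, hmem, x, y, by simp⟩

lemma legal_image {u v : List Letter}
    (hu : IsLegal randPD u) (hv : v ∈ substWord randPD u) : IsLegal randPD v := by
  obtain ⟨k, c, w, hw, huw⟩ := hu
  obtain ⟨w', hw', hvw'⟩ := infix_lift huw hv
  exact ⟨k + 1, c, w', Set.mem_biUnion hw hw', hvw'⟩

lemma legal_of_infix {u v : List Letter} (h : v <:+: u) (hu : IsLegal randPD u) :
    IsLegal randPD v := by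
  obtain ⟨k, c, w, hw, huw⟩ := hu
  exact ⟨k, c, w, hw, h.trans huw⟩

/-- `(aba)^m`. -/
def p : ℕ → List Letter
  | 0 => []
  | m + 1 => [a, b, a] ++ p m

/-- `(aab)^m`. -/
def q : ℕ → List Letter
  | 0 => []
  | m + 1 => [a, a, b] ++ q m

lemma p_succ (m : ℕ) : p (m + 1) = [a, b, a] ++ p m := rfl

lemma q_succ (m : ℕ) : q (m + 1) = [a, a, b] ++ q m := rfl

lemma p_add (m n : ℕ) : p (m + n) = p m ++ p n := by
  induction m with
  | zero => rw [Nat.zero_add]; rfl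
  | succ m ih =>
    have : m + 1 + n = (m + n) + 1 := by ring
    rw [this, p_succ, p_succ, ih, List.append_assoc]

lemma abaaba_mem : ([a, b, a, a, b, a] : List Letter) ∈ substWord randPD [a, b, a] := by
  refine ⟨[a, b], Or.inl rfl, [a, a, b, a], ⟨[a, a], rfl, [b, a],
    ⟨[b, a], Or.inr rfl, [], rfl, by simp⟩, rfl⟩, rfl⟩

lemma p_double (m : ℕ) : p (2 * m) ∈ substWord randPD (p m) := by
  induction m with
  | zero => exact rfl
  | succ m ih =>
    have h1 : 2 * (m + 1) = 2 + 2 * m := by ring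
    rw [h1, p_add 2 (2 * m), p_succ]
    have h2 : p 2 = [a, b, a, a, b, a] := rfl
    rw [h2]
    exact substWord_append abaaba_mem ih

lemma legal_p_one : IsLegal randPD (p 1) := by
  have h2 : p 1 = [a, b, a] := rfl
  rw [h2]
  refine ⟨2, .a, [a, b, a, a], ?_, [], [a], by simp⟩
  refine Set.mem_biUnion (s := substPowWord randPD 1 [.a])
    (show [a, b] ∈ substPowWord randPD 1 [.a] from ?_) ?_
  · exact Set.mem_biUnion (show [Letter.a] ∈ substPowWord randPD 0 [.a] from rfl)
      ⟨[a, b], Or.inl rfl, [], rfl, by simp⟩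
  · exact ⟨[a, b], Or.inl rfl, [a, a], ⟨[a, a], rfl, [], rfl, by simp⟩, rfl⟩

lemma legal_p_pow (j : ℕ) : IsLegal randPD (p (2 ^ j)) := by
  induction j with
  | zero => exact legal_p_one
  | succ j ih =>
    have : 2 ^ (j + 1) = 2 * 2 ^ j := by ring
    rw [this]
    exact legal_image ih (p_double _)

lemma legal_p (m : ℕ) : IsLegal randPD (p m) := by
  obtain ⟨j, hj⟩ : ∃ j : ℕ, m ≤ 2 ^ j := ⟨m, Nat.le_of_lt (Nat.lt_two_pow_self (n := m))⟩
  have h : p m <:+: p (2 ^ j) := by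
    obtain ⟨d, hd⟩ := Nat.exists_eq_add_of_le hj
    rw [hd, p_add]
    exact (List.prefix_append _ _).isInfix
  exact legal_of_infix h (legal_p_pow j)

lemma a_p_eq (m : ℕ) : [a] ++ p m = q m ++ [a] := by
  induction m with
  | zero => rfl
  | succ m ih =>
    rw [p_succ, q_succ]
    calc [a] ++ ([a, b, a] ++ p m) = [a, a, b] ++ ([a] ++ p m) := by simp
    _ = [a, a, b] ++ (q m ++ [a]) := by rw [ih]
    _ = ([a, a, b] ++ q m) ++ [a] := by simp

lemma legal_q (m : ℕ) : IsLegal randPD (q m) := by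
  have h : q m <:+: p (m + 1) := by
    have : p (m + 1) = [a, b] ++ (q m ++ [a]) := by
      rw [p_succ, ← a_p_eq]; simp
    exact ⟨[a, b], [a], by rw [this]; simp⟩
  exact legal_of_infix h (legal_p (m + 1))

lemma extract_eq {A : Type*} (x : ℤ → A) (i : ℤ) (n : ℕ) :
    extract x i n = (List.range n).map (fun j : ℕ => x (i + (j : ℤ))) := by
  unfold _root_.extract
  simp only [List.pure_def, List.bind_eq_flatMap, ← List.map_eq_flatMap, List.map_map]
  rfl

lemma extract_add (x : ℤ → Letter) (i : ℤ) (m n : ℕ) :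
    extract x i (m + n) = extract x i m ++ extract x (i + m) n := by
  simp only [extract_eq, List.range_add, List.map_append, List.map_map]
  congr 1
  apply List.map_congr_left
  intro j _
  simp only [Function.comp_apply]
  congr 1
  push_cast
  ring

lemma extract_three (t : ℤ) : extract aabSeq (3 * t) 3 = [a, a, b] := by
  rw [extract_eq]
  simp only [List.range_succ, List.range_zero, List.map_append, List.map_cons, List.map_nil,
    List.nil_append, List.cons_append, List.append_nil, aabSeq]
  split_ifs <;> first | rfl | (exfalso; omega)

lemma extract_mul (t : ℤ) (m : ℕ) : extract aabSeq (3 * t) (3 * m) = q m := by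
  induction m generalizing t with
  | zero => rfl
  | succ m ih =>
    have h3 : 3 * (m + 1) = 3 + 3 * m := by ring
    rw [h3, extract_add, extract_three]
    have ht : (3 : ℤ) * t + (3 : ℕ) = 3 * (t + 1) := by push_cast; ring
    rw [ht, ih, q_succ]

lemma extract_legal (i : ℤ) (n : ℕ) : IsLegal randPD (extract aabSeq i n) := by
  set t := i / 3 with htdef
  have hmod : 0 ≤ i % 3 ∧ i % 3 < 3 := ⟨Int.emod_nonneg i (by norm_num), Int.emod_lt_of_pos i (by norm_num)⟩
  set r := (i % 3).toNat with hrdef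
  have hr3 : r < 3 := by omega
  have hi : i = 3 * t + r := by
    have := Int.mul_ediv_add_emod i 3
    omega
  set s := 3 * (n + 1) - (r + n) with hsdef
  have hsum : r + (n + s) = 3 * (n + 1) := by omega
  have hinf : extract aabSeq i n <:+: extract aabSeq (3 * t) (3 * (n + 1)) := by
    rw [← hsum, extract_add, extract_add]
    refine ⟨extract aabSeq (3 * t) r, extract aabSeq (3 * t + r + n) s, ?_⟩
    have hir : (3 : ℤ) * t + r = i := by omega
    rw [hir]
    simp
  rw [extract_mul] at hinf
  exact legal_of_infix hinf (legal_q (n + 1))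

end AabAux

/-- `(aab)^∞` lies in the random period doubling subshift and has
prime period `3`. -/
theorem aab_periodic_point : aabSeq ∈ Subshift randPD ∧ PrimePeriod aabSeq 3 := by
  constructor
  · intro i n
    exact AabAux.extract_legal i n
  · refine ⟨by norm_num, ?_, ?_⟩
    · intro n
      unfold aabSeq
      have : (n + (3 : ℕ)) % 3 = n % 3 := by omega
      rw [this]
    · intro qq hq hper
      by_contra hlt
      push_neg at hlt
      interval_cases qq
      · have := hper 2
        simp only [aabSeq] at this
        norm_num at this
        exact Letter.noConfusion this
      · have := hper 0
        simp only [aabSeq] at this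
        norm_num at this
        exact Letter.noConfusion this
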